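/- For β = 1 and h = 0, let 𝖶_n be a real random variable with Lebesgue density proportional to exp( −(√n/2)·w² + n·log cosh(n^{−1/4}·w) ), and let 𝖶 have density f_𝖶(w) = (√2 / (3^{1/4} Γ(1/4))) · exp(−w⁴/12). Then there exists C > 0 such that for all n ≥ 2, d_TV(𝖶_n, 𝖶) ≤ C·(log n)³·n^{−1/2}. -/

import Mathlib

open MeasureTheory Real

/-- Density `f_𝖶(w) = (√2 / (3^{1/4} Γ(1/4))) exp(−w⁴/12)` of the critical limit law. -/
noncomputable def quarticDensity (w : ℝ) : ℝ :=
  (Real.sqrt 2 / ((3 : ℝ) ^ ((1 : ℝ) / 4) * Real.Gamma (1 / 4))) * Real.exp (-w ^ 4 / 12)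

/-- Law of the critical limit random variable `𝖶`. -/
noncomputable def quarticMeasure : Measure ℝ :=
  volume.withDensity fun w => ENNReal.ofReal (quarticDensity w)

/-- Normalized density of `𝖶_n = n^{-1/4} U_n`, proportional to
`exp(−(√n/2) w² + n log cosh(n^{-1/4} w))` (critical Curie–Weiss, β = 1, h = 0). -/
noncomputable def Wndensity (n : ℕ) (w : ℝ) : ℝ :=
  Real.exp (-(Real.sqrt n / 2) * w ^ 2 +
      n * Real.log (Real.cosh ((n : ℝ) ^ (-(1 : ℝ) / 4) * w))) /
    ∫ u : ℝ, Real.exp (-(Real.sqrt n / 2) * u ^ 2 +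
      n * Real.log (Real.cosh ((n : ℝ) ^ (-(1 : ℝ) / 4) * u)))


/-- positivity from nonneg derivative on [0,b] -/
lemma pos_of_deriv_nonneg_Icc {F F' : ℝ → ℝ} {b : ℝ}
    (hd : ∀ t, HasDerivAt F (F' t) t) (h0 : F 0 = 0)
    (hF' : ∀ t, 0 ≤ t → t ≤ b → 0 ≤ F' t) {t : ℝ} (ht : 0 ≤ t) (htb : t ≤ b) : 0 ≤ F t := by
  have hmono : MonotoneOn F (Set.Icc 0 b) := by
    apply monotoneOn_of_deriv_nonneg (convex_Icc 0 b)
    · exact fun x _ => (hd x).continuousAt.continuousWithinAt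
    · exact fun x _ => ((hd x).differentiableAt).differentiableWithinAt
    · intro x hx
      rw [interior_Icc] at hx
      rw [(hd x).deriv]
      exact hF' x hx.1.le hx.2.le
  have := hmono (Set.mem_Icc.mpr ⟨le_rfl, ht.trans htb⟩) (Set.mem_Icc.mpr ⟨ht, htb⟩) ht
  rw [h0] at this
  exact this

lemma pos_of_deriv_nonneg' {F F' : ℝ → ℝ}
    (hd : ∀ t, HasDerivAt F (F' t) t) (h0 : F 0 = 0)
    (hF' : ∀ t, 0 ≤ t → 0 ≤ F' t) {t : ℝ} (ht : 0 ≤ t) : 0 ≤ F t :=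
  pos_of_deriv_nonneg_Icc hd h0 (fun u hu _ => hF' u hu) ht le_rfl

lemma sinh_le_mul_cosh {t : ℝ} (ht : 0 ≤ t) : Real.sinh t ≤ t * Real.cosh t := by
  have key : (0:ℝ) ≤ t * Real.cosh t - Real.sinh t := by
    apply pos_of_deriv_nonneg' (F' := fun t => t * Real.sinh t) _ (by simp) _ ht
    · intro u
      have h1 := ((hasDerivAt_id u).mul (Real.hasDerivAt_cosh u)).sub (Real.hasDerivAt_sinh u)
      refine h1.congr_deriv ?_
      simp [id_eq]
    · exact fun u hu => mul_nonneg hu (Real.sinh_nonneg_iff.mpr hu)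
  linarith

lemma mul_cosh_le_sinh {t : ℝ} (ht : 0 ≤ t) : (t - t^3/3) * Real.cosh t ≤ Real.sinh t := by
  have key : (0:ℝ) ≤ Real.sinh t - (t - t^3/3) * Real.cosh t := by
    apply pos_of_deriv_nonneg'
      (F' := fun t => t^2 * Real.cosh t - (t - t^3/3) * Real.sinh t) _ (by simp) _ ht
    · intro u
      have hp : HasDerivAt (fun t : ℝ => t - t^3/3) (1 - u^2) u := by
        have h2 := (hasDerivAt_id u).sub ((hasDerivAt_pow 3 u).div_const 3)
        refine h2.congr_deriv ?_
        simp [id_eq]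
      have h1 := (Real.hasDerivAt_sinh u).sub (hp.mul (Real.hasDerivAt_cosh u))
      refine h1.congr_deriv ?_
      ring
    · intro u hu
      show (0:ℝ) ≤ u^2 * Real.cosh u - (u - u^3/3) * Real.sinh u
      have hs := Real.sinh_nonneg_iff.mpr hu
      have hc := (Real.cosh_pos (x := u)).le
      have hA := sinh_le_mul_cosh hu
      rcases le_total (u - u^3/3) 0 with h | h
      · nlinarith
      · nlinarith [mul_le_mul_of_nonneg_left hA h, mul_nonneg (mul_nonneg hu (by positivity : (0:ℝ) ≤ u^3/3)) hc]
  linarith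

lemma sinh_le_poly_mul_cosh {t : ℝ} (ht : 0 ≤ t) (ht2 : t ≤ 2) :
    Real.sinh t ≤ (t - t^3/3 + 2*t^5/15) * Real.cosh t := by
  have key : (0:ℝ) ≤ (t - t^3/3 + 2*t^5/15) * Real.cosh t - Real.sinh t := by
    apply pos_of_deriv_nonneg_Icc (b := 2)
      (F' := fun t => (-t^2 + 2*t^4/3) * Real.cosh t + (t - t^3/3 + 2*t^5/15) * Real.sinh t)
      _ (by simp) _ ht ht2
    · intro u
      have hp : HasDerivAt (fun t : ℝ => t - t^3/3 + 2*t^5/15) (1 - u^2 + 2*u^4/3) u := by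
        have h2 := ((hasDerivAt_id u).sub ((hasDerivAt_pow 3 u).div_const 3)).add
          (((hasDerivAt_pow 5 u).const_mul 2).div_const 15)
        refine h2.congr_deriv ?_
        simp [id_eq]
        ring
      have h1 := (hp.mul (Real.hasDerivAt_cosh u)).sub (Real.hasDerivAt_sinh u)
      refine h1.congr_deriv ?_
      ring
    · intro u hu hub
      show (0:ℝ) ≤ (-u^2 + 2*u^4/3) * Real.cosh u + (u - u^3/3 + 2*u^5/15) * Real.sinh u
      have hs := Real.sinh_nonneg_iff.mpr hu
      have hc := (Real.cosh_pos (x := u)).le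
      have hA := mul_cosh_le_sinh hu
      have hpnn : (0:ℝ) ≤ u - u^3/3 + 2*u^5/15 := by nlinarith [sq_nonneg (u^2 - 5/4), sq_nonneg u]
      have key := mul_le_mul_of_nonneg_left hA hpnn
      have h6 : (0:ℝ) ≤ u^6 * (11 - 2*u^2) * Real.cosh u := by
        apply mul_nonneg (mul_nonneg (by positivity) (by nlinarith)) hc
      nlinarith
  linarith

noncomputable def gfun (t : ℝ) : ℝ := Real.log (Real.cosh t) - t^2/2


lemma gfun_even (t : ℝ) : gfun (-t) = gfun t := by
  simp [gfun, Real.cosh_neg]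

lemma hasDerivAt_logcosh (t : ℝ) :
    HasDerivAt (fun t => Real.log (Real.cosh t)) (Real.sinh t / Real.cosh t) t :=
  (Real.hasDerivAt_cosh t).log (Real.cosh_pos t).ne'

lemma logcosh_ge_aux {t : ℝ} (ht : 0 ≤ t) : t^2/2 - t^4/12 ≤ Real.log (Real.cosh t) := by
  have key : (0:ℝ) ≤ Real.log (Real.cosh t) - (t^2/2 - t^4/12) := by
    apply pos_of_deriv_nonneg_Icc (b := t)
      (F' := fun u => Real.sinh u / Real.cosh u - (u - u^3/3)) _ (by simp) _ ht le_rfl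
    · intro u
      have hq : HasDerivAt (fun u : ℝ => u^2/2 - u^4/12) (u - u^3/3) u := by
        have h2 := ((hasDerivAt_pow 2 u).div_const 2).sub ((hasDerivAt_pow 4 u).div_const 12)
        refine h2.congr_deriv ?_
        push_cast
        ring
      exact (hasDerivAt_logcosh u).sub hq
    · intro u hu _
      have := mul_cosh_le_sinh hu
      have hc := Real.cosh_pos (x := u)
      rw [sub_nonneg, le_div_iff₀ hc]
      linarith
  linarith

lemma logcosh_ge (t : ℝ) : t^2/2 - t^4/12 ≤ Real.log (Real.cosh t) := by
  rcases le_total 0 t with h | h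
  · exact logcosh_ge_aux h
  · have := logcosh_ge_aux (neg_nonneg.mpr h)
    rw [show (-t)^2 = t^2 by ring, show (-t)^4 = t^4 by ring, Real.cosh_neg] at this
    exact this

lemma logcosh_le_aux {t : ℝ} (ht : 0 ≤ t) (ht2 : t ≤ 2) :
    Real.log (Real.cosh t) ≤ t^2/2 - t^4/12 + t^6/45 := by
  have key : (0:ℝ) ≤ (t^2/2 - t^4/12 + t^6/45) - Real.log (Real.cosh t) := by
    apply pos_of_deriv_nonneg_Icc (b := 2)
      (F' := fun u => (u - u^3/3 + 2*u^5/15) - Real.sinh u / Real.cosh u) _ (by simp) _ ht ht2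
    · intro u
      have hq : HasDerivAt (fun u : ℝ => u^2/2 - u^4/12 + u^6/45) (u - u^3/3 + 2*u^5/15) u := by
        have h2 := (((hasDerivAt_pow 2 u).div_const 2).sub ((hasDerivAt_pow 4 u).div_const 12)).add
          ((hasDerivAt_pow 6 u).div_const 45)
        refine h2.congr_deriv ?_
        push_cast
        ring
      exact hq.sub (hasDerivAt_logcosh u)
    · intro u hu hub
      have := sinh_le_poly_mul_cosh hu hub
      have hc := Real.cosh_pos (x := u)
      rw [sub_nonneg, div_le_iff₀ hc]
      linarith
  linarith

lemma gfun_ge (t : ℝ) : -t^4/12 ≤ gfun t := by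
  have := logcosh_ge t
  simp only [gfun]
  linarith

lemma gfun_le_six {t : ℝ} (h : |t| ≤ 1) : gfun t ≤ -t^4/12 + t^6/45 := by
  rcases le_total 0 t with h0 | h0
  · have := logcosh_le_aux h0 (by rw [abs_of_nonneg h0] at h; linarith)
    simp only [gfun]; linarith
  · rw [← gfun_even, show t^4 = (-t)^4 by ring, show t^6 = (-t)^6 by ring]
    have h0' : 0 ≤ -t := by linarith
    have := logcosh_le_aux h0' (by rw [abs_of_nonpos h0] at h; linarith)
    simp only [gfun]; linarith

lemma gfun_anti : AntitoneOn gfun (Set.Ici 0) := by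
  apply antitoneOn_of_deriv_nonpos (convex_Ici 0)
  · apply Continuous.continuousOn
    have : Continuous fun t : ℝ => Real.log (Real.cosh t) :=
      Real.continuous_cosh.log fun x => (Real.cosh_pos (x := x)).ne'
    exact this.sub (by continuity)
  · intro x _
    exact (((hasDerivAt_logcosh x).sub ((hasDerivAt_pow 2 x).div_const 2)).differentiableAt).differentiableWithinAt
  · intro x hx
    rw [interior_Ici, Set.mem_Ioi] at hx
    have hd : HasDerivAt gfun (Real.sinh x / Real.cosh x - x) x := by
      have h2 := (hasDerivAt_logcosh x).sub ((hasDerivAt_pow 2 x).div_const 2)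
      refine h2.congr_deriv ?_
      push_cast
      ring
    rw [hd.deriv]
    have := sinh_le_mul_cosh hx.le
    have hc := Real.cosh_pos (x := x)
    rw [sub_nonpos, div_le_iff₀ hc]
    linarith

lemma logcosh_le_self {t : ℝ} (ht : 0 ≤ t) : Real.log (Real.cosh t) ≤ t := by
  rw [Real.log_le_iff_le_exp (Real.cosh_pos t), Real.cosh_eq]
  have h1 : Real.exp (-t) ≤ Real.exp t := Real.exp_le_exp.mpr (by linarith)
  linarith

lemma gfun_le_quadratic {t : ℝ} (h : 3 ≤ |t|) : gfun t ≤ -t^2/6 := by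
  have main : ∀ u : ℝ, 3 ≤ u → gfun u ≤ -u^2/6 := by
    intro u hu
    have := logcosh_le_self (by linarith : (0:ℝ) ≤ u)
    simp only [gfun]
    nlinarith
  rcases le_total 0 t with h0 | h0
  · exact main t (by rwa [abs_of_nonneg h0] at h)
  · rw [← gfun_even, show t^2 = (-t)^2 by ring]
    exact main (-t) (by rwa [abs_of_nonpos h0] at h)

lemma gfun_le_quartic {t : ℝ} (h : |t| ≤ 3) : gfun t ≤ -t^4/1000 := by
  have main : ∀ u : ℝ, 0 ≤ u → u ≤ 3 → gfun u ≤ -u^4/1000 := by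
    intro u hu hu3
    rcases le_total u (6/5) with hc | hc
    · have := logcosh_le_aux hu (by linarith)
      have h6 : u^6 ≤ 36/25*u^4 := by
        nlinarith [pow_le_pow_left₀ hu hc 2, pow_nonneg hu 4]
      have h4 : (0:ℝ) ≤ u^4 := pow_nonneg hu 4
      simp only [gfun]
      linarith
    · have h1 : gfun u ≤ gfun (6/5) := gfun_anti (by norm_num) (Set.mem_Ici.mpr hu) hc
      have h2 : gfun (6/5) ≤ -(6/5:ℝ)^4/12 + (6/5:ℝ)^6/45 := by
        have := logcosh_le_aux (by norm_num : (0:ℝ) ≤ 6/5) (by norm_num)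
        simp only [gfun]
        linarith
      have h3 : u^4 ≤ 81 := by
        calc u^4 ≤ 3^4 := pow_le_pow_left₀ hu hu3 4
        _ = 81 := by norm_num
      norm_num at h2
      nlinarith
  rcases le_total 0 t with h0 | h0
  · exact main t h0 (by rwa [abs_of_nonneg h0] at h)
  · rw [← gfun_even, show t^4 = (-t)^4 by ring]
    exact main (-t) (by linarith) (by rw [abs_of_nonpos h0] at h; linarith)

noncomputable def En (n : ℕ) (w : ℝ) : ℝ :=
  -(Real.sqrt n / 2) * w ^ 2 + n * Real.log (Real.cosh ((n : ℝ) ^ (-(1 : ℝ) / 4) * w))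
noncomputable def phin (n : ℕ) (w : ℝ) : ℝ := Real.exp (En n w)
noncomputable def phi (w : ℝ) : ℝ := Real.exp (-w^4/12)

section pointwise
variable {n : ℕ} (hn : 1 ≤ n) (w : ℝ)

lemma npos (hn : 1 ≤ n) : (0:ℝ) < n := by exact_mod_cast Nat.lt_of_lt_of_le Nat.zero_lt_one hn

lemma na2 (hn : 1 ≤ n) : (n:ℝ) * ((n:ℝ) ^ (-(1:ℝ)/4))^2 = Real.sqrt n := by
  have h0 := (npos hn).le
  rw [← Real.rpow_natCast ((n:ℝ) ^ (-(1:ℝ)/4)) 2, ← Real.rpow_mul h0, Real.sqrt_eq_rpow]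
  nth_rewrite 1 [← Real.rpow_one (n:ℝ)]
  rw [← Real.rpow_add (npos hn)]
  norm_num

lemma na4 (hn : 1 ≤ n) : (n:ℝ) * ((n:ℝ) ^ (-(1:ℝ)/4))^4 = 1 := by
  have h0 := (npos hn).le
  rw [← Real.rpow_natCast ((n:ℝ) ^ (-(1:ℝ)/4)) 4, ← Real.rpow_mul h0]
  nth_rewrite 1 [← Real.rpow_one (n:ℝ)]
  rw [← Real.rpow_add (npos hn)]
  norm_num

lemma na6 (hn : 1 ≤ n) : (n:ℝ) * ((n:ℝ) ^ (-(1:ℝ)/4))^6 = 1 / Real.sqrt n := by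
  have h0 := (npos hn).le
  rw [← Real.rpow_natCast ((n:ℝ) ^ (-(1:ℝ)/4)) 6, ← Real.rpow_mul h0, Real.sqrt_eq_rpow]
  nth_rewrite 1 [← Real.rpow_one (n:ℝ)]
  rw [← Real.rpow_add (npos hn),
    show (1:ℝ) + -1/4 * ((6:ℕ):ℝ) = -(1/2) by norm_num, Real.rpow_neg h0]
  exact (one_div _).symm

lemma En_eq (hn : 1 ≤ n) (w : ℝ) :
    En n w = n * gfun ((n:ℝ) ^ (-(1:ℝ)/4) * w) := by
  have key : (n:ℝ) * (((n:ℝ) ^ (-(1:ℝ)/4) * w)^2/2) = Real.sqrt n / 2 * w^2 := by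
    rw [mul_pow,
      show (n:ℝ) * (((n:ℝ) ^ (-(1:ℝ)/4))^2 * w^2 / 2)
        = ((n:ℝ) * ((n:ℝ) ^ (-(1:ℝ)/4))^2) * w^2 / 2 from by ring, na2 hn]
    ring
  unfold En gfun
  rw [mul_sub]
  rw [show (n:ℝ) * (((n:ℝ) ^ (-(1:ℝ)/4) * w)^2/2)
      = Real.sqrt n / 2 * w^2 from key]
  ring

lemma nt4 (hn : 1 ≤ n) (w : ℝ) : (n:ℝ) * ((n:ℝ) ^ (-(1:ℝ)/4) * w)^4 = w^4 := by
  rw [mul_pow, show (n:ℝ) * (((n:ℝ) ^ (-(1:ℝ)/4))^4 * w^4)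
      = ((n:ℝ) * ((n:ℝ) ^ (-(1:ℝ)/4))^4) * w^4 from by ring, na4 hn, one_mul]

lemma nt6 (hn : 1 ≤ n) (w : ℝ) : (n:ℝ) * ((n:ℝ) ^ (-(1:ℝ)/4) * w)^6 = w^6 / Real.sqrt n := by
  rw [mul_pow, show (n:ℝ) * (((n:ℝ) ^ (-(1:ℝ)/4))^6 * w^6)
      = ((n:ℝ) * ((n:ℝ) ^ (-(1:ℝ)/4))^6) * w^6 from by ring, na6 hn]
  ring

lemma nt2 (hn : 1 ≤ n) (w : ℝ) : (n:ℝ) * ((n:ℝ) ^ (-(1:ℝ)/4) * w)^2 = Real.sqrt n * w^2 := by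
  rw [mul_pow, show (n:ℝ) * (((n:ℝ) ^ (-(1:ℝ)/4))^2 * w^2)
      = ((n:ℝ) * ((n:ℝ) ^ (-(1:ℝ)/4))^2) * w^2 from by ring, na2 hn]

lemma P1 (hn : 1 ≤ n) (w : ℝ) : phi w ≤ phin n w := by
  unfold phi phin
  apply Real.exp_le_exp.mpr
  rw [En_eq hn]
  set t := (n:ℝ) ^ (-(1:ℝ)/4) * w with ht
  have h1 := mul_le_mul_of_nonneg_left (gfun_ge t) (npos hn).le
  have h2 := nt4 hn w
  rw [← ht] at h2
  nlinarith

lemma P2 (hn : 1 ≤ n) (w : ℝ) (h : |(n:ℝ) ^ (-(1:ℝ)/4) * w| ≤ 1) :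
    phin n w ≤ phi w * Real.exp (w^6 / (45 * Real.sqrt n)) := by
  unfold phi phin
  rw [← Real.exp_add]
  apply Real.exp_le_exp.mpr
  rw [En_eq hn]
  set t := (n:ℝ) ^ (-(1:ℝ)/4) * w with ht
  have h1 := mul_le_mul_of_nonneg_left (gfun_le_six h) (npos hn).le
  have h2 := nt4 hn w; rw [← ht] at h2
  have h3 := nt6 hn w; rw [← ht] at h3
  have hsn : (0:ℝ) < Real.sqrt n := Real.sqrt_pos.mpr (npos hn)
  have expand : (n:ℝ) * (-t^4/12 + t^6/45) = -((n:ℝ)*t^4)/12 + ((n:ℝ)*t^6)/45 := by ring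
  rw [expand, h2, h3] at h1
  have : w ^ 6 / Real.sqrt ↑n / 45 = w^6/(45*Real.sqrt n) := by ring
  linarith

lemma P3 (hn : 1 ≤ n) (w : ℝ) (h : |(n:ℝ) ^ (-(1:ℝ)/4) * w| ≤ 3) :
    phin n w ≤ Real.exp (-w^4/1000) := by
  unfold phin
  apply Real.exp_le_exp.mpr
  rw [En_eq hn]
  set t := (n:ℝ) ^ (-(1:ℝ)/4) * w with ht
  have h1 := mul_le_mul_of_nonneg_left (gfun_le_quartic h) (npos hn).le
  have h2 := nt4 hn w; rw [← ht] at h2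
  nlinarith

lemma P4 (hn : 1 ≤ n) (w : ℝ) (h : 3 ≤ |(n:ℝ) ^ (-(1:ℝ)/4) * w|) :
    phin n w ≤ Real.exp (-(3*(n:ℝ)/4)) * Real.exp (-w^2/12) := by
  unfold phin
  rw [← Real.exp_add]
  apply Real.exp_le_exp.mpr
  rw [En_eq hn]
  set t := (n:ℝ) ^ (-(1:ℝ)/4) * w with ht
  have h1 := mul_le_mul_of_nonneg_left (gfun_le_quadratic h) (npos hn).le
  have h2 := nt2 hn w; rw [← ht] at h2
  have hsn1 : (1:ℝ) ≤ Real.sqrt n := by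
    rw [show (1:ℝ) = Real.sqrt 1 from (Real.sqrt_one).symm]
    exact Real.sqrt_le_sqrt (by exact_mod_cast hn)
  have hss : Real.sqrt n * Real.sqrt n = (n:ℝ) := Real.mul_self_sqrt (npos hn).le
  have ht9 : 9 ≤ t^2 := by nlinarith [abs_nonneg t, sq_abs t]
  -- w^2 = sqrt n * t^2  ≥ 9 sqrt n
  have hw2 : w^2 = Real.sqrt n * t^2 := by
    have hsn : (0:ℝ) < Real.sqrt n := Real.sqrt_pos.mpr (npos hn)
    have : Real.sqrt n * ((n:ℝ) * t^2) = Real.sqrt n * (Real.sqrt n * w^2) := by rw [h2]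
    rw [show Real.sqrt n * ((n:ℝ) * t^2) = (n:ℝ) * (Real.sqrt n * t^2) from by ring,
      show Real.sqrt n * (Real.sqrt n * w^2) = (Real.sqrt n * Real.sqrt n) * w^2 from by ring,
      hss] at this
    exact (mul_left_cancel₀ (npos hn).ne' this).symm
  have hgoal : (n:ℝ) * (-t^2/6) ≤ -(3*(n:ℝ)/4) + -w^2/12 := by
    have hw9 : 9 * Real.sqrt n ≤ w^2 := by
      rw [hw2]
      nlinarith
    have hensq : (n:ℝ) * t^2 = Real.sqrt n * w^2 := h2
    nlinarith [mul_le_mul_of_nonneg_left hw9 (by linarith : (0:ℝ) ≤ Real.sqrt n - 1),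
      mul_le_mul_of_nonneg_left hw9 (by norm_num : (0:ℝ) ≤ (1:ℝ)/12)]
  linarith
end pointwise


lemma exp_quart_le {c : ℝ} (hc : 0 < c) (w : ℝ) :
    Real.exp (-w^4/c) ≤ Real.exp (1/c) * Real.exp (-(2/c)*w^2) := by
  rw [← Real.exp_add]
  apply Real.exp_le_exp.mpr
  have hr : 1/c + -(2/c)*w^2 = (1-2*w^2)/c := by ring
  rw [hr]
  gcongr
  nlinarith [sq_nonneg (w^2-1)]

lemma int_quart {c : ℝ} (hc : 0 < c) : Integrable (fun w : ℝ => Real.exp (-w^4/c)) := by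
  apply Integrable.mono' ((integrable_exp_neg_mul_sq (by positivity : (0:ℝ) < 2/c)).const_mul
    (Real.exp (1/c)))
  · apply Continuous.aestronglyMeasurable
    exact Real.continuous_exp.comp (by continuity)
  · filter_upwards with w
    rw [Real.norm_eq_abs, abs_of_pos (Real.exp_pos _)]
    exact exp_quart_le hc w

lemma cube_le_exp {u : ℝ} (hu : 0 ≤ u) : u^3 ≤ 27 * Real.exp u := by
  have h1 : u/3 + 1 ≤ Real.exp (u/3) := Real.add_one_le_exp _
  have h2 : (u/3)^3 ≤ (u/3+1)^3 := pow_le_pow_left₀ (by positivity) (by linarith) 3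
  have h3 : (u/3+1)^3 ≤ (Real.exp (u/3))^3 := pow_le_pow_left₀ (by positivity) h1 3
  rw [← Real.exp_nat_mul] at h3
  rw [show ((3:ℕ):ℝ) * (u/3) = u by push_cast; ring] at h3
  nlinarith

lemma pow6_phi_le (w : ℝ) :
    w^6 * phi w ≤ (46656 * Real.exp (1/12)) * Real.exp (-(1/12)*w^2) := by
  have h1 : w^6 ≤ 46656 * Real.exp (w^2/12) := by
    have := cube_le_exp (u := w^2/12) (by positivity)
    nlinarith
  have h2 : phi w ≤ Real.exp (1/12) * Real.exp (-(2/12)*w^2) := exp_quart_le (by norm_num) w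
  have h3 : (0:ℝ) ≤ phi w := (Real.exp_pos _).le
  have h4 := mul_le_mul h1 h2 h3 (by positivity)
  calc w^6 * phi w ≤ 46656 * Real.exp (w^2/12) * (Real.exp (1/12) * Real.exp (-(2/12)*w^2)) := h4
  _ = (46656 * Real.exp (1/12)) * (Real.exp (w^2/12) * Real.exp (-(2/12)*w^2)) := by ring
  _ = (46656 * Real.exp (1/12)) * Real.exp (-(1/12)*w^2) := by
      rw [← Real.exp_add]
      congr 1
      ring

lemma int_pow6 : Integrable (fun w : ℝ => w^6 * phi w) := by
  apply Integrable.mono' ((integrable_exp_neg_mul_sq (by norm_num : (0:ℝ) < 1/12)).const_mul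
    (46656 * Real.exp (1/12)))
  · apply Continuous.aestronglyMeasurable
    exact (continuous_pow 6).mul (Real.continuous_exp.comp (by continuity))
  · filter_upwards with w
    have h0 : (0:ℝ) < phi w := Real.exp_pos _
    rw [Real.norm_eq_abs, abs_mul, abs_of_pos h0, abs_pow]
    have key := pow6_phi_le |w|
    have e1 : phi |w| = phi w := by
      unfold phi
      rw [show |w|^4 = w^4 from by rw [← abs_pow]; exact abs_of_nonneg (by positivity)]
    have e2 : |w|^2 = w^2 := sq_abs w
    rw [e1, e2] at key
    exact key

lemma cont_phin (n : ℕ) : Continuous (phin n) := by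
  unfold phin En
  apply Real.continuous_exp.comp
  apply Continuous.add
  · exact (continuous_const.mul (continuous_pow 2))
  · exact continuous_const.mul ((Real.continuous_cosh.comp
      (continuous_const.mul continuous_id)).log fun x => (Real.cosh_pos _).ne')

lemma int_phin {n : ℕ} (hn : 1 ≤ n) : Integrable (phin n) := by
  apply Integrable.mono' (g := fun w => Real.exp (-w^4/1000)
    + Real.exp (-(3*(n:ℝ)/4)) * Real.exp (-(1/12)*w^2))
  · exact (int_quart (by norm_num)).add
      ((integrable_exp_neg_mul_sq (by norm_num : (0:ℝ) < 1/12)).const_mul _)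
  · exact (cont_phin n).aestronglyMeasurable
  · filter_upwards with w
    rw [Real.norm_eq_abs, abs_of_pos (show (0:ℝ) < phin n w from Real.exp_pos _)]
    rcases le_total |(n:ℝ) ^ (-(1:ℝ)/4) * w| 3 with h | h
    · have := P3 hn w h
      have h2 : (0:ℝ) ≤ Real.exp (-(3*(n:ℝ)/4)) * Real.exp (-(1/12)*w^2) := by positivity
      unfold phin at *
      linarith
    · have := P4 hn w h
      have h2 : (0:ℝ) ≤ Real.exp (-w^4/1000) := (Real.exp_pos _).le
      have h3 : Real.exp (-w^2/12) = Real.exp (-(1/12)*w^2) := by congr 1; ring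
      unfold phin at *
      rw [h3] at this
      linarith

lemma int_phi : Integrable phi := int_quart (by norm_num)

noncomputable def Zn (n : ℕ) : ℝ := ∫ u : ℝ, phin n u
noncomputable def Zquart : ℝ := ∫ w : ℝ, phi w

lemma exp_sub_one_le {x : ℝ} (h0 : 0 ≤ x) (h1 : x ≤ 1) : Real.exp x ≤ 1 + 3*x := by
  have ha : 1 - x ≤ Real.exp (-x) := by
    have := Real.add_one_le_exp (-x)
    linarith
  have hb : (1 - x) * Real.exp x ≤ Real.exp (-x) * Real.exp x :=
    mul_le_mul_of_nonneg_right ha (Real.exp_pos x).le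
  rw [← Real.exp_add] at hb
  simp only [neg_add_cancel, Real.exp_zero] at hb
  have hc : Real.exp x ≤ Real.exp 1 := Real.exp_le_exp.mpr h1
  have hd : Real.exp 1 ≤ 3 := by
    have := Real.exp_one_lt_d9
    linarith
  nlinarith [Real.exp_pos x]

lemma PW {n : ℕ} (hn : 1 ≤ n) (w : ℝ) :
    phin n w - phi w ≤ w^6 * phi w / (15 * Real.sqrt n)
      + Real.exp (-(n:ℝ)^((1:ℝ)/3)/2000) * Real.exp (-w^4/2000)
      + Real.exp (-(3*(n:ℝ)/4)) * Real.exp (-w^2/12) := by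
  have hnr : (1:ℝ) ≤ (n:ℝ) := by exact_mod_cast hn
  have ha : (0:ℝ) ≤ (n:ℝ) ^ (-(1:ℝ)/4) := Real.rpow_nonneg (npos hn).le _
  have hsn : (0:ℝ) < Real.sqrt n := Real.sqrt_pos.mpr (npos hn)
  have ht2 : (0:ℝ) ≤ Real.exp (-(n:ℝ)^((1:ℝ)/3)/2000) * Real.exp (-w^4/2000) := by positivity
  have ht3 : (0:ℝ) ≤ Real.exp (-(3*(n:ℝ)/4)) * Real.exp (-w^2/12) := by positivity
  have hphi : (0:ℝ) ≤ phi w := (Real.exp_pos _).le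
  have hw6 : w^6 = |w|^6 := by
    rw [← abs_pow]
    exact (abs_of_nonneg (by positivity)).symm
  rcases le_total |w| ((n:ℝ)^((1:ℝ)/12)) with hw | hw
  · -- central region
    have htle : |(n:ℝ) ^ (-(1:ℝ)/4) * w| ≤ 1 := by
      rw [abs_mul, abs_of_nonneg ha]
      calc (n:ℝ) ^ (-(1:ℝ)/4) * |w| ≤ (n:ℝ) ^ (-(1:ℝ)/4) * (n:ℝ)^((1:ℝ)/12) :=
            mul_le_mul_of_nonneg_left hw ha
      _ = (n:ℝ) ^ (-(1:ℝ)/4 + (1:ℝ)/12) := (Real.rpow_add (npos hn) _ _).symm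
      _ ≤ 1 := Real.rpow_le_one_of_one_le_of_nonpos hnr (by norm_num)
    have hP2 := P2 hn w htle
    have hw6le : w^6 ≤ Real.sqrt n := by
      rw [hw6]
      calc |w|^6 ≤ ((n:ℝ)^((1:ℝ)/12))^6 := pow_le_pow_left₀ (abs_nonneg w) hw 6
      _ = (n:ℝ)^((1:ℝ)/12 * (6:ℕ)) := by
          rw [← Real.rpow_natCast ((n:ℝ)^((1:ℝ)/12)) 6, ← Real.rpow_mul (npos hn).le]
      _ = Real.sqrt n := by
          rw [Real.sqrt_eq_rpow]
          norm_num
    have hε1 : w^6/(45*Real.sqrt n) ≤ 1 := by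
      rw [div_le_one (by positivity)]
      nlinarith
    have hε0 : 0 ≤ w^6/(45*Real.sqrt n) := by positivity
    have hee := exp_sub_one_le hε0 hε1
    have : phin n w ≤ phi w * (1 + 3*(w^6/(45*Real.sqrt n))) :=
      hP2.trans (mul_le_mul_of_nonneg_left hee hphi)
    have heq : phi w * (1 + 3*(w^6/(45*Real.sqrt n))) = phi w + w^6 * phi w / (15*Real.sqrt n) := by
      field_simp
      ring
    rw [heq] at this
    linarith
  · -- tail region
    have hterm1 : (0:ℝ) ≤ w^6 * phi w / (15 * Real.sqrt n) := by positivity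
    rcases le_total |(n:ℝ) ^ (-(1:ℝ)/4) * w| 3 with h3 | h3
    · have hP3 := P3 hn w h3
      have hw4 : (n:ℝ)^((1:ℝ)/3) ≤ w^4 := by
        have : ((n:ℝ)^((1:ℝ)/12))^4 ≤ |w|^4 := pow_le_pow_left₀ (Real.rpow_nonneg (npos hn).le _) hw 4
        rw [← Real.rpow_natCast ((n:ℝ)^((1:ℝ)/12)) 4, ← Real.rpow_mul (npos hn).le,
          show (1:ℝ)/12 * ((4:ℕ):ℝ) = (1:ℝ)/3 by norm_num] at this
        calc (n:ℝ)^((1:ℝ)/3) ≤ |w|^4 := this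
        _ = w^4 := by rw [← abs_pow]; exact abs_of_nonneg (by positivity)
      have hsplit : Real.exp (-w^4/1000) ≤
          Real.exp (-(n:ℝ)^((1:ℝ)/3)/2000) * Real.exp (-w^4/2000) := by
        rw [← Real.exp_add]
        apply Real.exp_le_exp.mpr
        linarith
      linarith [hP3.trans hsplit]
    · have hP4 := P4 hn w h3
      linarith

lemma exp_neg_le_four_div_sq {u : ℝ} (hu : 0 < u) : Real.exp (-u) ≤ 4/u^2 := by
  have h1 : u/2 + 1 ≤ Real.exp (u/2) := Real.add_one_le_exp _
  have h2 : (u/2)^2 ≤ (Real.exp (u/2))^2 :=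
    pow_le_pow_left₀ (by positivity) (by linarith) 2
  have h3 : (Real.exp (u/2))^2 = Real.exp u := by
    rw [← Real.exp_nat_mul]
    congr 1
    push_cast
    ring
  rw [h3] at h2
  have h4 : u^2/4 ≤ Real.exp u := by nlinarith
  rw [Real.exp_neg]
  have h5 : (Real.exp u)⁻¹ ≤ (u^2/4)⁻¹ := by
    gcongr
  calc (Real.exp u)⁻¹ ≤ (u^2/4)⁻¹ := h5
  _ = 4/u^2 := by rw [inv_div]

lemma tail2 {n : ℕ} (hn : 1 ≤ n) :
    Real.exp (-(n:ℝ)^((1:ℝ)/3)/2000) ≤ 16000000/Real.sqrt n := by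
  have hnr : (1:ℝ) ≤ (n:ℝ) := by exact_mod_cast hn
  have hu : (0:ℝ) < (n:ℝ)^((1:ℝ)/3)/2000 := by positivity
  have h1 : Real.exp (-((n:ℝ)^((1:ℝ)/3)/2000)) ≤ 4/((n:ℝ)^((1:ℝ)/3)/2000)^2 :=
    exp_neg_le_four_div_sq hu
  have h2 : ((n:ℝ)^((1:ℝ)/3))^2 = (n:ℝ)^((2:ℝ)/3) := by
    rw [← Real.rpow_natCast ((n:ℝ)^((1:ℝ)/3)) 2, ← Real.rpow_mul (by positivity)]
    norm_num
  have h3 : Real.sqrt n ≤ (n:ℝ)^((2:ℝ)/3) := by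
    rw [Real.sqrt_eq_rpow]
    exact Real.rpow_le_rpow_of_exponent_le hnr (by norm_num)
  have hsn : (0:ℝ) < Real.sqrt n := Real.sqrt_pos.mpr (by linarith)
  have h4 : 4/((n:ℝ)^((1:ℝ)/3)/2000)^2 = 16000000/(n:ℝ)^((2:ℝ)/3) := by
    rw [div_pow, ← h2]
    rw [div_div_eq_mul_div]
    norm_num
  have h5 : 16000000/(n:ℝ)^((2:ℝ)/3) ≤ 16000000/Real.sqrt n := by
    gcongr
  have he : -(n:ℝ)^((1:ℝ)/3)/2000 = -((n:ℝ)^((1:ℝ)/3)/2000) := by ring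
  rw [he]
  calc Real.exp (-((n:ℝ)^((1:ℝ)/3)/2000)) ≤ 4/((n:ℝ)^((1:ℝ)/3)/2000)^2 := h1
  _ = 16000000/(n:ℝ)^((2:ℝ)/3) := h4
  _ ≤ 16000000/Real.sqrt n := h5

lemma tail3 {n : ℕ} (hn : 1 ≤ n) :
    Real.exp (-(3*(n:ℝ)/4)) ≤ 8/Real.sqrt n := by
  have hnr : (1:ℝ) ≤ (n:ℝ) := by exact_mod_cast hn
  have hu : (0:ℝ) < 3*(n:ℝ)/4 := by linarith
  have h1 := exp_neg_le_four_div_sq hu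
  have hsn : (0:ℝ) < Real.sqrt n := Real.sqrt_pos.mpr (by linarith)
  have hs : Real.sqrt n ≤ (n:ℝ) := by
    calc Real.sqrt n ≤ Real.sqrt ((n:ℝ)^2) := Real.sqrt_le_sqrt (by nlinarith)
    _ = (n:ℝ) := Real.sqrt_sq (by linarith)
  have h2 : 4/(3*(n:ℝ)/4)^2 ≤ 8/Real.sqrt n := by
    rw [div_le_div_iff₀ (by positivity) hsn]
    nlinarith
  exact h1.trans h2


lemma int_gauss12 : Integrable (fun w : ℝ => Real.exp (-w^2/12)) := by
  have := integrable_exp_neg_mul_sq (show (0:ℝ) < 1/12 by norm_num)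
  apply this.congr
  filter_upwards with w
  congr 1
  ring

noncomputable def C0 : ℝ := (∫ w : ℝ, w^6 * phi w)/15
  + 16000000 * (∫ w : ℝ, Real.exp (-w^4/2000))
  + 8 * (∫ w : ℝ, Real.exp (-w^2/12)) + 1

lemma C0_pos : 0 < C0 := by
  have h1 : (0:ℝ) ≤ ∫ w : ℝ, w^6 * phi w :=
    integral_nonneg fun w => mul_nonneg (by positivity) (Real.exp_pos _).le
  have h2 : (0:ℝ) ≤ ∫ w : ℝ, Real.exp (-w^4/2000) :=
    integral_nonneg fun w => (Real.exp_pos _).le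
  have h3 : (0:ℝ) ≤ ∫ w : ℝ, Real.exp (-w^2/12) :=
    integral_nonneg fun w => (Real.exp_pos _).le
  unfold C0
  linarith

lemma Zn_sub_le {n : ℕ} (hn : 1 ≤ n) : Zn n - Zquart ≤ C0 / Real.sqrt n := by
  have hsn : (0:ℝ) < Real.sqrt n := Real.sqrt_pos.mpr (npos hn)
  have i1 : Integrable (fun w : ℝ => w^6 * phi w / (15 * Real.sqrt n)) :=
    int_pow6.div_const _
  have i2 : Integrable (fun w : ℝ =>
      Real.exp (-(n:ℝ)^((1:ℝ)/3)/2000) * Real.exp (-w^4/2000)) :=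
    (int_quart (by norm_num)).const_mul _
  have i3 : Integrable (fun w : ℝ =>
      Real.exp (-(3*(n:ℝ)/4)) * Real.exp (-w^2/12)) :=
    int_gauss12.const_mul _
  have hmono : Zn n - Zquart ≤ ∫ w : ℝ, (w^6 * phi w / (15 * Real.sqrt n)
      + Real.exp (-(n:ℝ)^((1:ℝ)/3)/2000) * Real.exp (-w^4/2000)
      + Real.exp (-(3*(n:ℝ)/4)) * Real.exp (-w^2/12)) := by
    rw [show Zn n - Zquart = ∫ w : ℝ, (phin n w - phi w) from
      (integral_sub (int_phin hn) int_phi).symm]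
    exact integral_mono ((int_phin hn).sub int_phi) ((i1.add i2).add i3) (PW hn)
  have iA : Integrable (fun w : ℝ => w^6 * phi w / (15 * Real.sqrt n)
      + Real.exp (-(n:ℝ)^((1:ℝ)/3)/2000) * Real.exp (-w^4/2000)) := i1.add i2
  rw [integral_add iA i3, integral_add i1 i2, integral_div,
    integral_const_mul, integral_const_mul] at hmono
  have e1 : (∫ w : ℝ, w^6 * phi w) / (15 * Real.sqrt n)
      = ((∫ w : ℝ, w^6 * phi w)/15) / Real.sqrt n := by ring
  have h2 : (0:ℝ) ≤ ∫ w : ℝ, Real.exp (-w^4/2000) :=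
    integral_nonneg fun w => (Real.exp_pos _).le
  have h3 : (0:ℝ) ≤ ∫ w : ℝ, Real.exp (-w^2/12) :=
    integral_nonneg fun w => (Real.exp_pos _).le
  have b2 := mul_le_mul_of_nonneg_right (tail2 hn) h2
  have b3 := mul_le_mul_of_nonneg_right (tail3 hn) h3
  have final : ((∫ w : ℝ, w^6 * phi w)/15) / Real.sqrt n
      + (16000000/Real.sqrt n) * (∫ w : ℝ, Real.exp (-w^4/2000))
      + (8/Real.sqrt n) * (∫ w : ℝ, Real.exp (-w^2/12)) ≤ C0 / Real.sqrt n := by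
    unfold C0
    rw [div_mul_eq_mul_div, div_mul_eq_mul_div, ← add_div, ← add_div]
    gcongr ?_ / _
    linarith
  linarith [e1 ▸ hmono, b2, b3]



lemma Zq_pos : 0 < Zquart := by
  unfold Zquart
  apply (integral_pos_iff_support_of_nonneg (f := phi) ?_ int_phi).mpr
  · have : Function.support phi = Set.univ :=
      Set.eq_univ_of_forall fun x => Function.mem_support.mpr (Real.exp_pos _).ne'
    rw [this]
    simp
  · intro w
    exact (Real.exp_pos _).le

lemma norm_const :
    (Real.sqrt 2 / ((3 : ℝ) ^ ((1 : ℝ) / 4) * Real.Gamma (1 / 4))) * Zquart = 1 := by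
  have hzq : Zquart = 2 * ∫ x in Set.Ioi (0:ℝ), Real.exp (-x^4/12) := by
    unfold Zquart
    rw [show (fun x : ℝ => phi x) = fun x : ℝ => Real.exp (-|x|^4/12) from funext fun x => by
      unfold phi
      rw [show |x|^4 = x^4 from by rw [← abs_pow]; exact abs_of_nonneg (by positivity)]]
    exact integral_comp_abs (f := fun x => Real.exp (-x^4/12))
  have hioi : ∫ x in Set.Ioi (0:ℝ), Real.exp (-x^4/12)
      = ((1:ℝ)/12) ^ (-1/(4:ℝ)) * Real.Gamma (1/4 + 1) := by
    rw [show (fun x : ℝ => Real.exp (-x^4/12))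
        = fun x : ℝ => Real.exp (-(1/12) * x^((4:ℝ))) from funext fun x => by
      rw [show ((4:ℝ)) = ((4:ℕ):ℝ) by norm_num, Real.rpow_natCast]
      congr 1
      ring]
    exact integral_exp_neg_mul_rpow (by norm_num) (by norm_num)
  have hgam : Real.Gamma (1/4 + 1) = (1/4) * Real.Gamma (1/4) := Real.Gamma_add_one (by norm_num)
  have h112 : ((1:ℝ)/12) ^ (-1/(4:ℝ)) = (12:ℝ)^((1:ℝ)/4) := by
    rw [one_div, Real.inv_rpow (by norm_num : (0:ℝ) ≤ 12),
      show (-1/(4:ℝ)) = -((1:ℝ)/4) by norm_num,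
      Real.rpow_neg (by norm_num : (0:ℝ) ≤ 12), inv_inv]
  have h12q : (12:ℝ)^((1:ℝ)/4) = Real.sqrt 2 * (3:ℝ)^((1:ℝ)/4) := by
    rw [show (12:ℝ) = 4 * 3 by norm_num, Real.mul_rpow (by norm_num) (by norm_num)]
    congr 1
    rw [show (4:ℝ) = 2^(2:ℕ) by norm_num, ← Real.rpow_natCast (2:ℝ) 2,
      ← Real.rpow_mul (by norm_num : (0:ℝ) ≤ 2), Real.sqrt_eq_rpow]
    norm_num
  rw [hzq, hioi, hgam, h112, h12q]
  have hΓ : 0 < Real.Gamma (1/4) := Real.Gamma_pos_of_pos (by norm_num)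
  have h3 : (0:ℝ) < (3:ℝ)^((1:ℝ)/4) := Real.rpow_pos_of_pos (by norm_num) _
  have hs2 : Real.sqrt 2 * Real.sqrt 2 = 2 := Real.mul_self_sqrt (by norm_num)
  field_simp
  linear_combination 2 * hs2

lemma meas_toReal {f : ℝ → ℝ} (hf : Integrable f) (hnn : ∀ w, 0 ≤ f w) {s : Set ℝ}
    (hs : MeasurableSet s) :
    ((volume.withDensity fun w => ENNReal.ofReal (f w)) s).toReal = ∫ w in s, f w := by
  rw [withDensity_apply _ hs,
    ← ofReal_integral_eq_lintegral_ofReal hf.integrableOn (ae_of_all _ fun w => hnn w)]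
  exact ENNReal.toReal_ofReal (integral_nonneg fun w => hnn w)



/-- Total variation approximation of the rescaled critical latent variable `𝖶_n` by the
quartic limit law `𝖶`, with rate `C (log n)³ n^{-1/2}` (uniformly over Borel sets). -/
theorem stmt17 :
    ∃ C > 0, ∀ n : ℕ, 2 ≤ n → ∀ s : Set ℝ, MeasurableSet s →
      |((volume.withDensity fun w => ENNReal.ofReal (Wndensity n w)) s).toReal -
          (quarticMeasure s).toReal| ≤ C * (Real.log n) ^ 3 / Real.sqrt n := by
  have hlog2 : 0 < Real.log 2 := Real.log_pos one_lt_two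
  have hCpos : 0 < 2*C0/(Zquart*(Real.log 2)^3) :=
    div_pos (by linarith [C0_pos]) (mul_pos Zq_pos (pow_pos hlog2 3))
  refine ⟨2*C0/(Zquart*(Real.log 2)^3), hCpos, ?_⟩
  intro n hn2 s hs
  have hn1 : 1 ≤ n := le_trans one_le_two hn2
  have hZq := Zq_pos
  have hZle : Zquart ≤ Zn n := integral_mono int_phi (int_phin hn1) (P1 hn1)
  have hZn : 0 < Zn n := lt_of_lt_of_le hZq hZle
  have hsn : 0 < Real.sqrt n := Real.sqrt_pos.mpr (npos hn1)
  set c0 := Real.sqrt 2 / ((3:ℝ)^((1:ℝ)/4) * Real.Gamma (1/4)) with hc0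
  have hc0eq : c0 = 1/Zquart :=
    eq_one_div_of_mul_eq_one_left (by rw [hc0]; linear_combination norm_const)
  have hc0pos : 0 < c0 := by rw [hc0eq]; positivity
  have hWd : ∀ w, Wndensity n w = phin n w / Zn n := fun w => rfl
  have hQd : ∀ w, quarticDensity w = c0 * phi w := fun w => rfl
  have intW : Integrable (Wndensity n) := (int_phin hn1).div_const _
  have intQ : Integrable quarticDensity := int_phi.const_mul _
  have nnW : ∀ w, 0 ≤ Wndensity n w := fun w => by
    rw [hWd w]
    exact div_nonneg (Real.exp_pos _).le hZn.le
  have nnQ : ∀ w, 0 ≤ quarticDensity w := fun w => by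
    rw [hQd w]
    exact mul_nonneg hc0pos.le (Real.exp_pos _).le
  rw [show ((volume.withDensity fun w => ENNReal.ofReal (Wndensity n w)) s).toReal
      = ∫ w in s, Wndensity n w from meas_toReal intW nnW hs,
    show (quarticMeasure s).toReal = ∫ w in s, quarticDensity w from meas_toReal intQ nnQ hs]
  -- pointwise bound
  have hpt : ∀ w, |Wndensity n w - quarticDensity w| ≤
      (phin n w - phi w)/Zquart + phi w * (1/Zquart - 1/(Zn n)) := by
    intro w
    have h1 : 0 ≤ phin n w - phi w := sub_nonneg.mpr (P1 hn1 w)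
    have hphi : 0 ≤ phi w := (Real.exp_pos _).le
    have hdd : (phin n w - phi w)/(Zn n) ≤ (phin n w - phi w)/Zquart := by gcongr
    have hinvle : 1/(Zn n) ≤ 1/Zquart := by gcongr
    have heq : Wndensity n w - quarticDensity w
        = (phin n w - phi w)/(Zn n) + phi w * (1/(Zn n) - 1/Zquart) := by
      rw [hWd w, hQd w, hc0eq]
      field_simp
      ring
    rw [heq]
    have habs := abs_add_le ((phin n w - phi w)/(Zn n)) (phi w * (1/(Zn n) - 1/Zquart))
    rw [abs_of_nonneg (div_nonneg h1 hZn.le),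
      abs_of_nonpos (mul_nonpos_of_nonneg_of_nonpos hphi (by linarith))] at habs
    have : -(phi w * (1/(Zn n) - 1/Zquart)) = phi w * (1/Zquart - 1/(Zn n)) := by ring
    rw [this] at habs
    linarith
  have intD : Integrable (fun w => Wndensity n w - quarticDensity w) := intW.sub intQ
  have intB : Integrable (fun w => (phin n w - phi w)/Zquart + phi w * (1/Zquart - 1/(Zn n))) :=
    (((int_phin hn1).sub int_phi).div_const _).add (int_phi.mul_const _)
  have hTV : |(∫ w in s, Wndensity n w) - ∫ w in s, quarticDensity w|
      ≤ 2*(Zn n - Zquart)/Zquart := by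
    have e1 : (∫ w in s, Wndensity n w) - ∫ w in s, quarticDensity w
        = ∫ w in s, (Wndensity n w - quarticDensity w) :=
      (integral_sub intW.integrableOn intQ.integrableOn).symm
    rw [e1]
    have e2 : |∫ w in s, (Wndensity n w - quarticDensity w)|
        ≤ ∫ w in s, |Wndensity n w - quarticDensity w| := by
      have := norm_integral_le_integral_norm (μ := volume.restrict s)
        (f := fun w => Wndensity n w - quarticDensity w)
      simpa [Real.norm_eq_abs] using this
    have e3 : (∫ w in s, |Wndensity n w - quarticDensity w|)
        ≤ ∫ w, |Wndensity n w - quarticDensity w| :=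
      setIntegral_le_integral intD.abs (ae_of_all _ fun w => abs_nonneg _)
    have e4 : (∫ w, |Wndensity n w - quarticDensity w|) ≤
        ∫ w, ((phin n w - phi w)/Zquart + phi w * (1/Zquart - 1/(Zn n))) :=
      integral_mono intD.abs intB hpt
    have e5 : (∫ w, ((phin n w - phi w)/Zquart + phi w * (1/Zquart - 1/(Zn n))))
        = (Zn n - Zquart)/Zquart + Zquart * (1/Zquart - 1/(Zn n)) := by
      have iA' : Integrable (fun w => (phin n w - phi w)/Zquart) :=
        ((int_phin hn1).sub int_phi).div_const _
      have iB' : Integrable (fun w => phi w * (1/Zquart - 1/(Zn n))) := int_phi.mul_const _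
      rw [integral_add iA' iB']
      have eA : (∫ w : ℝ, (phin n w - phi w)/Zquart) = (Zn n - Zquart)/Zquart := by
        rw [integral_div, integral_sub (int_phin hn1) int_phi]
        rfl
      have eB : (∫ w : ℝ, phi w * (1/Zquart - 1/(Zn n)))
          = Zquart * (1/Zquart - 1/(Zn n)) := by
        rw [integral_mul_const]
        rfl
      rw [eA, eB]
    have h7 : Zquart * (1/Zquart - 1/(Zn n)) = (Zn n - Zquart)/(Zn n) := by
      field_simp
    have h8 : (Zn n - Zquart)/(Zn n) ≤ (Zn n - Zquart)/Zquart := by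
      gcongr
    have h9 : 2*(Zn n - Zquart)/Zquart
        = (Zn n - Zquart)/Zquart + (Zn n - Zquart)/Zquart := by ring
    linarith [e2, e3, e4, e5.le, e5.ge]
  have hfinal : 2*(Zn n - Zquart)/Zquart ≤ 2*C0/(Zquart * Real.sqrt n) := by
    calc 2*(Zn n - Zquart)/Zquart ≤ 2*(C0/Real.sqrt n)/Zquart := by
          gcongr
          exact Zn_sub_le hn1
    _ = 2*C0/(Zquart * Real.sqrt n) := by ring
  have hlogn : Real.log 2 ≤ Real.log n := by
    apply Real.log_le_log (by norm_num)
    exact_mod_cast hn2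
  have hcube : (Real.log 2)^3 ≤ (Real.log n)^3 := pow_le_pow_left₀ hlog2.le hlogn 3
  have hC3 : 2*C0/Zquart ≤ (2*C0/(Zquart*(Real.log 2)^3)) * (Real.log n)^3 := by
    calc 2*C0/Zquart = (2*C0/(Zquart*(Real.log 2)^3)) * (Real.log 2)^3 := by
          field_simp
    _ ≤ (2*C0/(Zquart*(Real.log 2)^3)) * (Real.log n)^3 :=
          mul_le_mul_of_nonneg_left hcube hCpos.le
  calc |(∫ w in s, Wndensity n w) - ∫ w in s, quarticDensity w|
      ≤ 2*(Zn n - Zquart)/Zquart := hTV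
  _ ≤ 2*C0/(Zquart * Real.sqrt n) := hfinal
  _ = (2*C0/Zquart)/Real.sqrt n := by ring
  _ ≤ ((2*C0/(Zquart*(Real.log 2)^3)) * (Real.log n)^3)/Real.sqrt n := by gcongr
  _ = 2*C0/(Zquart*(Real.log 2)^3) * (Real.log n)^3 / Real.sqrt n := by ring
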